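/- Define T⁺[u,v](z) = Λ⁺(z) u(z) - (ε/(2n)) ∫_{-1}^1 φ'(z̄) u(z̄) e^{-εn|z-z̄|} dz̄ + (ε e^{-2n}/(2n)) ∫_{-1}^1 φ'(z̄) v(z̄) e^{-nε(z+z̄)} dz̄ and T⁻[u,v](z) = Λ⁻(z) v(z) + (ε/(2n)) ∫_{-1}^1 φ'(z̄) v(z̄) e^{-εn|z-z̄|} dz̄ - (ε e^{-2n}/(2n)) ∫_{-1}^1 φ'(z̄) u(z̄) e^{-nε(z+z̄)} dz̄, for given bounded functions Λ⁺, Λ⁻ and φ' ∈ L^∞([-1,1]). Then for all f, g, u, v ∈ L²([-1,1]): -∫_{-1}^1 T⁺[u,v] φ' f dz + ∫_{-1}^1 T⁻[u,v] φ' g dz = -∫_{-1}^1 φ' u T⁺[f,g] dz + ∫_{-1}^1 φ' v T⁻[f,g] dz. -/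

import Mathlib

open Real MeasureTheory Set

noncomputable def Tplus (Λp φ' : ℝ → ℝ) (ε : ℝ) (n : ℕ) (u v : ℝ → ℝ) : ℝ → ℝ :=
  fun z => Λp z * u z
    - (ε / (2 * n)) * (∫ w in Icc (-1:ℝ) 1, φ' w * u w * Real.exp (-(ε * n) * |z - w|))
    + (ε * Real.exp (-2 * (n : ℝ)) / (2 * n)) *
        (∫ w in Icc (-1:ℝ) 1, φ' w * v w * Real.exp (-((n : ℝ) * ε) * (z + w)))

noncomputable def Tminus (Λm φ' : ℝ → ℝ) (ε : ℝ) (n : ℕ) (u v : ℝ → ℝ) : ℝ → ℝ :=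
  fun z => Λm z * v z
    + (ε / (2 * n)) * (∫ w in Icc (-1:ℝ) 1, φ' w * v w * Real.exp (-(ε * n) * |z - w|))
    - (ε * Real.exp (-2 * (n : ℝ)) / (2 * n)) *
        (∫ w in Icc (-1:ℝ) 1, φ' w * u w * Real.exp (-((n : ℝ) * ε) * (z + w)))

namespace AdjointnessAux

noncomputable def K1 (ε : ℝ) (n : ℕ) : ℝ → ℝ → ℝ := fun z w => Real.exp (-(ε * n) * |z - w|)

noncomputable def K2 (ε : ℝ) (n : ℕ) : ℝ → ℝ → ℝ := fun z w => Real.exp (-((n : ℝ) * ε) * (z + w))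

noncomputable def Jint (K : ℝ → ℝ → ℝ) (X : ℝ → ℝ) : ℝ → ℝ :=
  fun z => ∫ w in Icc (-1:ℝ) 1, X w * K z w

lemma K1_cont (ε : ℝ) (n : ℕ) : Continuous fun p : ℝ × ℝ => K1 ε n p.1 p.2 := by
  unfold K1; fun_prop

lemma K2_cont (ε : ℝ) (n : ℕ) : Continuous fun p : ℝ × ℝ => K2 ε n p.1 p.2 := by
  unfold K2; fun_prop

lemma K1_symm (ε : ℝ) (n : ℕ) : ∀ z w, K1 ε n z w = K1 ε n w z := by
  intro z w; unfold K1; rw [abs_sub_comm]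

lemma K2_symm (ε : ℝ) (n : ℕ) : ∀ z w, K2 ε n z w = K2 ε n w z := by
  intro z w; unfold K2; rw [add_comm]

lemma K1_bound (ε : ℝ) (n : ℕ) : ∀ z ∈ Icc (-1:ℝ) 1, ∀ w ∈ Icc (-1:ℝ) 1,
    |K1 ε n z w| ≤ Real.exp (2 * (|ε| * n)) := by
  intro z hz w hw
  unfold K1
  rw [abs_of_pos (Real.exp_pos _)]
  apply Real.exp_le_exp.mpr
  have hz' : |z| ≤ 1 := abs_le.mpr ⟨hz.1, hz.2⟩
  have hw' : |w| ≤ 1 := abs_le.mpr ⟨hw.1, hw.2⟩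
  have hzw : |z - w| ≤ 2 := by
    calc |z - w| ≤ |z| + |w| := abs_sub _ _
      _ ≤ 2 := by linarith
  have h1 : -(ε * ↑n) * |z - w| ≤ |ε * ↑n| * |z - w| :=
    mul_le_mul_of_nonneg_right (neg_le_abs _) (abs_nonneg _)
  have h2 : |ε * ↑n| * |z - w| ≤ |ε * ↑n| * 2 :=
    mul_le_mul_of_nonneg_left hzw (abs_nonneg _)
  have h3 : |ε * (n:ℝ)| = |ε| * n := by rw [abs_mul, Nat.abs_cast]
  rw [h3] at h1 h2
  linarith

lemma K2_bound (ε : ℝ) (n : ℕ) : ∀ z ∈ Icc (-1:ℝ) 1, ∀ w ∈ Icc (-1:ℝ) 1,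
    |K2 ε n z w| ≤ Real.exp (2 * (|ε| * n)) := by
  intro z hz w hw
  unfold K2
  rw [abs_of_pos (Real.exp_pos _)]
  apply Real.exp_le_exp.mpr
  have hz' : |z| ≤ 1 := abs_le.mpr ⟨hz.1, hz.2⟩
  have hw' : |w| ≤ 1 := abs_le.mpr ⟨hw.1, hw.2⟩
  have hzw : |z + w| ≤ 2 := by
    calc |z + w| ≤ |z| + |w| := abs_add_le _ _
      _ ≤ 2 := by linarith
  have h1 : -((n:ℝ) * ε) * (z + w) ≤ |(n:ℝ) * ε| * |z + w| := by
    calc -((n:ℝ) * ε) * (z + w) ≤ |(-((n:ℝ) * ε)) * (z + w)| := le_abs_self _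
      _ = |(n:ℝ) * ε| * |z + w| := by rw [abs_mul, abs_neg]
  have h2 : |(n:ℝ) * ε| * |z + w| ≤ |(n:ℝ) * ε| * 2 :=
    mul_le_mul_of_nonneg_left hzw (abs_nonneg _)
  have h3 : |(n:ℝ) * ε| = |ε| * n := by rw [abs_mul, Nat.abs_cast, mul_comm]
  rw [h3] at h1 h2
  linarith

lemma aesm_Jint (X : ℝ → ℝ) (hX : Integrable X (volume.restrict (Icc (-1:ℝ) 1)))
    (K : ℝ → ℝ → ℝ) (hK : Continuous fun p : ℝ × ℝ => K p.1 p.2) :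
    AEStronglyMeasurable (Jint K X) (volume.restrict (Icc (-1:ℝ) 1)) := by
  have h : AEStronglyMeasurable (fun p : ℝ × ℝ => X p.2 * K p.1 p.2)
      ((volume.restrict (Icc (-1:ℝ) 1)).prod (volume.restrict (Icc (-1:ℝ) 1))) :=
    hX.1.comp_snd.mul hK.aestronglyMeasurable
  exact h.integral_prod_right'

lemma integrable_slice (X : ℝ → ℝ) (hX : Integrable X (volume.restrict (Icc (-1:ℝ) 1)))
    (K : ℝ → ℝ → ℝ) (hK : Continuous fun p : ℝ × ℝ => K p.1 p.2)
    (C : ℝ) (hKb : ∀ z ∈ Icc (-1:ℝ) 1, ∀ w ∈ Icc (-1:ℝ) 1, |K z w| ≤ C)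
    (z : ℝ) (hz : z ∈ Icc (-1:ℝ) 1) :
    Integrable (fun w => X w * K z w) (volume.restrict (Icc (-1:ℝ) 1)) := by
  have h := hX.bdd_mul (c := C)
    ((hK.comp (Continuous.prodMk_right z)).aestronglyMeasurable)
    (by filter_upwards [ae_restrict_mem measurableSet_Icc] with w hw
        rw [Real.norm_eq_abs]; exact hKb z hz w hw)
  exact h.congr (Filter.Eventually.of_forall fun w => mul_comm _ _)

lemma bound_Jint (X : ℝ → ℝ) (hX : Integrable X (volume.restrict (Icc (-1:ℝ) 1)))
    (K : ℝ → ℝ → ℝ) (hK : Continuous fun p : ℝ × ℝ => K p.1 p.2)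
    (C : ℝ) (hKb : ∀ z ∈ Icc (-1:ℝ) 1, ∀ w ∈ Icc (-1:ℝ) 1, |K z w| ≤ C) :
    ∀ᵐ z ∂(volume.restrict (Icc (-1:ℝ) 1)),
      ‖Jint K X z‖ ≤ C * ∫ w in Icc (-1:ℝ) 1, |X w| := by
  filter_upwards [ae_restrict_mem measurableSet_Icc] with z hz
  rw [Real.norm_eq_abs]
  have hint := integrable_slice X hX K hK C hKb z hz
  calc |Jint K X z| = ‖∫ w in Icc (-1:ℝ) 1, X w * K z w‖ := (Real.norm_eq_abs _).symm
    _ ≤ ∫ w in Icc (-1:ℝ) 1, ‖X w * K z w‖ := norm_integral_le_integral_norm _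
    _ = ∫ w in Icc (-1:ℝ) 1, |X w * K z w| := by
        simp only [Real.norm_eq_abs]
    _ ≤ ∫ w in Icc (-1:ℝ) 1, C * |X w| := by
        refine integral_mono_ae hint.abs ((hX.abs).const_mul C) ?_
        filter_upwards [ae_restrict_mem measurableSet_Icc] with w hw
        rw [abs_mul]
        calc |X w| * |K z w| ≤ |X w| * C :=
              mul_le_mul_of_nonneg_left (hKb z hz w hw) (abs_nonneg _)
          _ = C * |X w| := mul_comm _ _
    _ = C * ∫ w in Icc (-1:ℝ) 1, |X w| := integral_const_mul _ _

lemma integrable_Jint_mul (X R : ℝ → ℝ)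
    (hX : Integrable X (volume.restrict (Icc (-1:ℝ) 1)))
    (hR : Integrable R (volume.restrict (Icc (-1:ℝ) 1)))
    (K : ℝ → ℝ → ℝ) (hK : Continuous fun p : ℝ × ℝ => K p.1 p.2)
    (C : ℝ) (hKb : ∀ z ∈ Icc (-1:ℝ) 1, ∀ w ∈ Icc (-1:ℝ) 1, |K z w| ≤ C) :
    Integrable (fun z => Jint K X z * R z) (volume.restrict (Icc (-1:ℝ) 1)) :=
  hR.bdd_mul (aesm_Jint X hX K hK) (bound_Jint X hX K hK C hKb)

lemma swap_key (F G : ℝ → ℝ)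
    (hF : Integrable F (volume.restrict (Icc (-1:ℝ) 1)))
    (hG : Integrable G (volume.restrict (Icc (-1:ℝ) 1)))
    (K : ℝ → ℝ → ℝ) (hK : Continuous fun p : ℝ × ℝ => K p.1 p.2)
    (C : ℝ) (hKb : ∀ z ∈ Icc (-1:ℝ) 1, ∀ w ∈ Icc (-1:ℝ) 1, |K z w| ≤ C)
    (hsym : ∀ z w, K z w = K w z) :
    ∫ z in Icc (-1:ℝ) 1, Jint K F z * G z = ∫ z in Icc (-1:ℝ) 1, Jint K G z * F z := by
  have hKae : ∀ᵐ p ∂((volume.restrict (Icc (-1:ℝ) 1)).prod (volume.restrict (Icc (-1:ℝ) 1))),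
      ‖K p.1 p.2‖ ≤ C := by
    rw [Measure.prod_restrict]
    filter_upwards [ae_restrict_mem (measurableSet_Icc.prod measurableSet_Icc)] with p hp
    rw [Real.norm_eq_abs]
    exact hKb p.1 hp.1 p.2 hp.2
  have hprod : Integrable (fun p : ℝ × ℝ => F p.2 * K p.1 p.2 * G p.1)
      ((volume.restrict (Icc (-1:ℝ) 1)).prod (volume.restrict (Icc (-1:ℝ) 1))) := by
    have h1 : Integrable (fun p : ℝ × ℝ => G p.1 * F p.2)
        ((volume.restrict (Icc (-1:ℝ) 1)).prod (volume.restrict (Icc (-1:ℝ) 1))) :=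
      hG.mul_prod hF
    have h2 := h1.bdd_mul (c := C) hK.aestronglyMeasurable hKae
    exact h2.congr (Filter.Eventually.of_forall fun p => by ring)
  calc ∫ z in Icc (-1:ℝ) 1, Jint K F z * G z
      = ∫ z in Icc (-1:ℝ) 1, ∫ w in Icc (-1:ℝ) 1, F w * K z w * G z := by
        refine integral_congr_ae (Filter.Eventually.of_forall fun z => ?_)
        exact (integral_mul_const _ _).symm
    _ = ∫ w in Icc (-1:ℝ) 1, ∫ z in Icc (-1:ℝ) 1, F w * K z w * G z :=
        integral_integral_swap hprod
    _ = ∫ w in Icc (-1:ℝ) 1, Jint K G w * F w := by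
        refine integral_congr_ae (Filter.Eventually.of_forall fun w => ?_)
        simp only [Jint]
        rw [← integral_mul_const]
        refine integral_congr_ae (Filter.Eventually.of_forall fun z => ?_)
        simp only [hsym z w]; ring

lemma expand (c1 c2 : ℝ) (A J1 J2 R : ℝ → ℝ)
    (hA : Integrable (fun z => A z * R z) (volume.restrict (Icc (-1:ℝ) 1)))
    (hJ1 : Integrable (fun z => J1 z * R z) (volume.restrict (Icc (-1:ℝ) 1)))
    (hJ2 : Integrable (fun z => J2 z * R z) (volume.restrict (Icc (-1:ℝ) 1))) :
    ∫ z in Icc (-1:ℝ) 1, (A z - c1 * J1 z + c2 * J2 z) * R z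
      = (∫ z in Icc (-1:ℝ) 1, A z * R z) - c1 * (∫ z in Icc (-1:ℝ) 1, J1 z * R z)
        + c2 * (∫ z in Icc (-1:ℝ) 1, J2 z * R z) := by
  have h : ∀ z, (A z - c1 * J1 z + c2 * J2 z) * R z
      = (A z * R z - c1 * (J1 z * R z)) + c2 * (J2 z * R z) := fun z => by ring
  simp_rw [h]
  have i1 : Integrable (fun z => c1 * (J1 z * R z)) (volume.restrict (Icc (-1:ℝ) 1)) :=
    hJ1.const_mul c1
  have i2 : Integrable (fun z => c2 * (J2 z * R z)) (volume.restrict (Icc (-1:ℝ) 1)) :=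
    hJ2.const_mul c2
  have i3 : Integrable (fun z => A z * R z - c1 * (J1 z * R z))
      (volume.restrict (Icc (-1:ℝ) 1)) := hA.sub i1
  rw [integral_add i3 i2, integral_sub hA i1, integral_const_mul, integral_const_mul]

end AdjointnessAux

open AdjointnessAux in
theorem adjointness_identity (Λp Λm φ' : ℝ → ℝ) (ε : ℝ) (n : ℕ) (hn : 1 ≤ n)
    (hφm : Measurable φ') (Cφ : ℝ) (hφb : ∀ z, |φ' z| ≤ Cφ)
    (hΛpm : Measurable Λp) (CΛ : ℝ) (hΛpb : ∀ z, |Λp z| ≤ CΛ)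
    (hΛmm : Measurable Λm) (hΛmb : ∀ z, |Λm z| ≤ CΛ)
    (f g u v : ℝ → ℝ)
    (hf : MemLp f 2 (MeasureTheory.volume.restrict (Icc (-1:ℝ) 1)))
    (hg : MemLp g 2 (MeasureTheory.volume.restrict (Icc (-1:ℝ) 1)))
    (hu : MemLp u 2 (MeasureTheory.volume.restrict (Icc (-1:ℝ) 1)))
    (hv : MemLp v 2 (MeasureTheory.volume.restrict (Icc (-1:ℝ) 1))) :
    -(∫ z in Icc (-1:ℝ) 1, Tplus Λp φ' ε n u v z * φ' z * f z)
        + (∫ z in Icc (-1:ℝ) 1, Tminus Λm φ' ε n u v z * φ' z * g z)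
      = -(∫ z in Icc (-1:ℝ) 1, φ' z * u z * Tplus Λp φ' ε n f g z)
        + (∫ z in Icc (-1:ℝ) 1, φ' z * v z * Tminus Λm φ' ε n f g z) := by
  haveI : IsFiniteMeasure (volume.restrict (Icc (-1:ℝ) 1)) := by
    constructor
    rw [Measure.restrict_apply_univ]
    exact measure_Icc_lt_top
  set C0 : ℝ := Real.exp (2 * (|ε| * n)) with hC0def
  -- integrability of the base functions
  have hfi : Integrable f (volume.restrict (Icc (-1:ℝ) 1)) := hf.integrable one_le_two
  have hgi : Integrable g (volume.restrict (Icc (-1:ℝ) 1)) := hg.integrable one_le_two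
  have hui : Integrable u (volume.restrict (Icc (-1:ℝ) 1)) := hu.integrable one_le_two
  have hvi : Integrable v (volume.restrict (Icc (-1:ℝ) 1)) := hv.integrable one_le_two
  have hφb' : ∃ C, ∀ x, ‖φ' x‖ ≤ C := ⟨Cφ, fun x => by rw [Real.norm_eq_abs]; exact hφb x⟩
  have hP : Integrable (fun z => φ' z * u z) (volume.restrict (Icc (-1:ℝ) 1)) :=
    hui.bdd_mul (c := hφb'.choose) hφm.aestronglyMeasurable (Filter.Eventually.of_forall hφb'.choose_spec)
  have hQ : Integrable (fun z => φ' z * v z) (volume.restrict (Icc (-1:ℝ) 1)) :=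
    hvi.bdd_mul (c := hφb'.choose) hφm.aestronglyMeasurable (Filter.Eventually.of_forall hφb'.choose_spec)
  have hRf : Integrable (fun z => φ' z * f z) (volume.restrict (Icc (-1:ℝ) 1)) :=
    hfi.bdd_mul (c := hφb'.choose) hφm.aestronglyMeasurable (Filter.Eventually.of_forall hφb'.choose_spec)
  have hS : Integrable (fun z => φ' z * g z) (volume.restrict (Icc (-1:ℝ) 1)) :=
    hgi.bdd_mul (c := hφb'.choose) hφm.aestronglyMeasurable (Filter.Eventually.of_forall hφb'.choose_spec)
  -- integrability of L² products
  have h12 : (1 : ENNReal) / 1 = 1 / 2 + 1 / 2 := by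
    rw [ENNReal.add_halves]; norm_num
  have hprod2 : ∀ (a b : ℝ → ℝ), MemLp a 2 (volume.restrict (Icc (-1:ℝ) 1)) →
      MemLp b 2 (volume.restrict (Icc (-1:ℝ) 1)) →
      Integrable (fun z => a z * b z) (volume.restrict (Icc (-1:ℝ) 1)) := by
    intro a b ha hb
    have h := hb.smul (p := 2) (r := 1) ha
    exact memLp_one_iff_integrable.mp h
  have huf := hprod2 u f hu hf
  have hvg := hprod2 v g hv hg
  -- product with two bounded measurable functions
  have hbd2 : ∀ (Λ : ℝ → ℝ), Measurable Λ → (∀ z, |Λ z| ≤ CΛ) →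
      ∀ (a b : ℝ → ℝ), Integrable (fun z => a z * b z) (volume.restrict (Icc (-1:ℝ) 1)) →
      Integrable (fun z => Λ z * a z * (φ' z * b z)) (volume.restrict (Icc (-1:ℝ) 1)) := by
    intro Λ hΛm hΛb a b hab
    have h := hab.bdd_mul (c := CΛ * Cφ) ((hΛm.mul hφm).aestronglyMeasurable)
      (Filter.Eventually.of_forall fun z => by
        rw [Real.norm_eq_abs, Pi.mul_apply, abs_mul]
        exact mul_le_mul (hΛb z) (hφb z) (abs_nonneg _) ((abs_nonneg _).trans (hΛb z)))
    exact h.congr (Filter.Eventually.of_forall fun z => by simp only [Pi.mul_apply]; ring)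
  have hΛpuf := hbd2 Λp hΛpm hΛpb u f huf
  have hΛmvg := hbd2 Λm hΛmm hΛmb v g hvg
  have hΛpfu := hΛpuf.congr (Filter.Eventually.of_forall fun z => by ring :
    (fun z => Λp z * u z * (φ' z * f z)) =ᵐ[volume.restrict (Icc (-1:ℝ) 1)]
      fun z => Λp z * f z * (φ' z * u z))
  have hΛmgv := hΛmvg.congr (Filter.Eventually.of_forall fun z => by ring :
    (fun z => Λm z * v z * (φ' z * g z)) =ᵐ[volume.restrict (Icc (-1:ℝ) 1)]
      fun z => Λm z * g z * (φ' z * v z))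
  -- J-term integrabilities
  have hJmul : ∀ (K : ℝ → ℝ → ℝ), (Continuous fun p : ℝ × ℝ => K p.1 p.2) →
      (∀ z ∈ Icc (-1:ℝ) 1, ∀ w ∈ Icc (-1:ℝ) 1, |K z w| ≤ C0) →
      ∀ (X R : ℝ → ℝ), Integrable X (volume.restrict (Icc (-1:ℝ) 1)) →
      Integrable R (volume.restrict (Icc (-1:ℝ) 1)) →
      Integrable (fun z => Jint K X z * R z) (volume.restrict (Icc (-1:ℝ) 1)) :=
    fun K hK hKb X R hX hR => integrable_Jint_mul X R hX hR K hK C0 hKb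
  have hK1b := K1_bound ε n
  have hK2b := K2_bound ε n
  have hK1c := K1_cont ε n
  have hK2c := K2_cont ε n
  -- expansions of the four integrals
  have e1 : ∫ z in Icc (-1:ℝ) 1, Tplus Λp φ' ε n u v z * φ' z * f z
      = (∫ z in Icc (-1:ℝ) 1, Λp z * u z * (φ' z * f z))
        - (ε / (2 * n)) * (∫ z in Icc (-1:ℝ) 1,
            Jint (K1 ε n) (fun w => φ' w * u w) z * (φ' z * f z))
        + (ε * Real.exp (-2 * (n:ℝ)) / (2 * n)) * (∫ z in Icc (-1:ℝ) 1,
            Jint (K2 ε n) (fun w => φ' w * v w) z * (φ' z * f z)) := by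
    rw [← expand (ε / (2 * n)) (ε * Real.exp (-2 * (n:ℝ)) / (2 * n))
      (fun z => Λp z * u z) (Jint (K1 ε n) (fun w => φ' w * u w))
      (Jint (K2 ε n) (fun w => φ' w * v w)) (fun z => φ' z * f z)
      hΛpuf (hJmul _ hK1c hK1b _ _ hP hRf) (hJmul _ hK2c hK2b _ _ hQ hRf)]
    refine integral_congr_ae (Filter.Eventually.of_forall fun z => ?_)
    simp only [Tplus, Jint, K1, K2]
    ring
  have e2 : ∫ z in Icc (-1:ℝ) 1, Tminus Λm φ' ε n u v z * φ' z * g z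
      = (∫ z in Icc (-1:ℝ) 1, Λm z * v z * (φ' z * g z))
        - (-(ε / (2 * n))) * (∫ z in Icc (-1:ℝ) 1,
            Jint (K1 ε n) (fun w => φ' w * v w) z * (φ' z * g z))
        + (-(ε * Real.exp (-2 * (n:ℝ)) / (2 * n))) * (∫ z in Icc (-1:ℝ) 1,
            Jint (K2 ε n) (fun w => φ' w * u w) z * (φ' z * g z)) := by
    rw [← expand (-(ε / (2 * n))) (-(ε * Real.exp (-2 * (n:ℝ)) / (2 * n)))
      (fun z => Λm z * v z) (Jint (K1 ε n) (fun w => φ' w * v w))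
      (Jint (K2 ε n) (fun w => φ' w * u w)) (fun z => φ' z * g z)
      hΛmvg (hJmul _ hK1c hK1b _ _ hQ hS) (hJmul _ hK2c hK2b _ _ hP hS)]
    refine integral_congr_ae (Filter.Eventually.of_forall fun z => ?_)
    simp only [Tminus, Jint, K1, K2]
    ring
  have e3 : ∫ z in Icc (-1:ℝ) 1, φ' z * u z * Tplus Λp φ' ε n f g z
      = (∫ z in Icc (-1:ℝ) 1, Λp z * f z * (φ' z * u z))
        - (ε / (2 * n)) * (∫ z in Icc (-1:ℝ) 1,
            Jint (K1 ε n) (fun w => φ' w * f w) z * (φ' z * u z))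
        + (ε * Real.exp (-2 * (n:ℝ)) / (2 * n)) * (∫ z in Icc (-1:ℝ) 1,
            Jint (K2 ε n) (fun w => φ' w * g w) z * (φ' z * u z)) := by
    rw [← expand (ε / (2 * n)) (ε * Real.exp (-2 * (n:ℝ)) / (2 * n))
      (fun z => Λp z * f z) (Jint (K1 ε n) (fun w => φ' w * f w))
      (Jint (K2 ε n) (fun w => φ' w * g w)) (fun z => φ' z * u z)
      hΛpfu (hJmul _ hK1c hK1b _ _ hRf hP) (hJmul _ hK2c hK2b _ _ hS hP)]
    refine integral_congr_ae (Filter.Eventually.of_forall fun z => ?_)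
    simp only [Tplus, Jint, K1, K2]
    ring
  have e4 : ∫ z in Icc (-1:ℝ) 1, φ' z * v z * Tminus Λm φ' ε n f g z
      = (∫ z in Icc (-1:ℝ) 1, Λm z * g z * (φ' z * v z))
        - (-(ε / (2 * n))) * (∫ z in Icc (-1:ℝ) 1,
            Jint (K1 ε n) (fun w => φ' w * g w) z * (φ' z * v z))
        + (-(ε * Real.exp (-2 * (n:ℝ)) / (2 * n))) * (∫ z in Icc (-1:ℝ) 1,
            Jint (K2 ε n) (fun w => φ' w * f w) z * (φ' z * v z)) := by
    rw [← expand (-(ε / (2 * n))) (-(ε * Real.exp (-2 * (n:ℝ)) / (2 * n)))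
      (fun z => Λm z * g z) (Jint (K1 ε n) (fun w => φ' w * g w))
      (Jint (K2 ε n) (fun w => φ' w * f w)) (fun z => φ' z * v z)
      hΛmgv (hJmul _ hK1c hK1b _ _ hS hQ) (hJmul _ hK2c hK2b _ _ hRf hQ)]
    refine integral_congr_ae (Filter.Eventually.of_forall fun z => ?_)
    simp only [Tminus, Jint, K1, K2]
    ring
  -- Λ-term equalities
  have L1 : (∫ z in Icc (-1:ℝ) 1, Λp z * u z * (φ' z * f z))
      = ∫ z in Icc (-1:ℝ) 1, Λp z * f z * (φ' z * u z) :=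
    integral_congr_ae (Filter.Eventually.of_forall fun z => by ring)
  have L2 : (∫ z in Icc (-1:ℝ) 1, Λm z * v z * (φ' z * g z))
      = ∫ z in Icc (-1:ℝ) 1, Λm z * g z * (φ' z * v z) :=
    integral_congr_ae (Filter.Eventually.of_forall fun z => by ring)
  -- swap equalities
  have S1 := swap_key (fun w => φ' w * u w) (fun z => φ' z * f z) hP hRf
    (K1 ε n) hK1c C0 hK1b (K1_symm ε n)
  have S2 := swap_key (fun w => φ' w * v w) (fun z => φ' z * g z) hQ hS
    (K1 ε n) hK1c C0 hK1b (K1_symm ε n)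
  have S3 := swap_key (fun w => φ' w * v w) (fun z => φ' z * f z) hQ hRf
    (K2 ε n) hK2c C0 hK2b (K2_symm ε n)
  have S4 := swap_key (fun w => φ' w * u w) (fun z => φ' z * g z) hP hS
    (K2 ε n) hK2c C0 hK2b (K2_symm ε n)
  rw [e1, e2, e3, e4, L1, L2, S1, S2, S3, S4]
  ring
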